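/- Let f and g be real-valued functions on ℝ that are periodic with period 1, integrable on [0,1], and satisfy ∫₀¹ f(t) dt = ∫₀¹ g(t) dt = 1. Then for every r ∈ [0,1] there exist x ∈ ℝ and t ∈ [0,1] such that ∫ₓ^{x+t} f(s) ds = ∫ₓ^{x+t} g(s) ds = r. -/
import Mathlib

private def eZ : Fin 3 → Fin 3 → ZMod 2 := fun a b =>
  if (a = 0 ∧ b = 1) ∨ (a = 1 ∧ b = 0) then 1 else 0

private def mZ : Fin 3 → ZMod 2 := fun a => if a = 1 then 1 else 0

private lemma e_not_full : ∀ a b c : Fin 3,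
    ¬((a = 0 ∨ b = 0 ∨ c = 0) ∧ (a = 1 ∨ b = 1 ∨ c = 1) ∧ (a = 2 ∨ b = 2 ∨ c = 2)) →
    eZ a b + eZ a c + eZ b c = 0 := by decide

private lemma e_no1 : ∀ a b : Fin 3, a ≠ 1 → b ≠ 1 → eZ a b = 0 := by decide
private lemma e_no0 : ∀ a b : Fin 3, a ≠ 0 → b ≠ 0 → eZ a b = 0 := by decide
private lemma e_eq_m : ∀ a b : Fin 3, a ≠ 2 → b ≠ 2 → eZ a b = mZ a + mZ b := by decide
private lemma zmod2_add_self : ∀ x : ZMod 2, x + x = 0 := by decide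

private lemma tele (n : ℕ) (f : ℕ → ZMod 2) :
    ∑ i ∈ Finset.range n, (f i + f (i + 1)) = f 0 + f n := by
  induction n with
  | zero => simp [(zmod2_add_self (f 0)).symm]
  | succ n ih =>
      rw [Finset.sum_range_succ, ih]
      linear_combination zmod2_add_self (f n)

private lemma sperner (n : ℕ) (hn : 0 < n) (L : ℕ → ℕ → Fin 3)
    (hbot : ∀ i, i ≤ n → L i 0 = 1)
    (htop : ∀ i, i ≤ n → L i n ≠ 1)
    (hleft : ∀ j, j ≤ n → L 0 j ≠ 2)
    (hright : ∀ j, j ≤ n → L n j ≠ 0) :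
    ∃ i j, i < n ∧ j < n ∧
      (∃ a b, (a = i ∨ a = i + 1) ∧ (b = j ∨ b = j + 1) ∧ L a b = 0) ∧
      (∃ a b, (a = i ∨ a = i + 1) ∧ (b = j ∨ b = j + 1) ∧ L a b = 1) ∧
      (∃ a b, (a = i ∨ a = i + 1) ∧ (b = j ∨ b = j + 1) ∧ L a b = 2) := by
  by_contra Hc
  have notfull : ∀ i j, i < n → j < n →
      ∀ a₁ b₁ a₂ b₂ a₃ b₃ : ℕ,
      (a₁ = i ∨ a₁ = i + 1) → (b₁ = j ∨ b₁ = j + 1) →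
      (a₂ = i ∨ a₂ = i + 1) → (b₂ = j ∨ b₂ = j + 1) →
      (a₃ = i ∨ a₃ = i + 1) → (b₃ = j ∨ b₃ = j + 1) →
      ¬((L a₁ b₁ = 0 ∨ L a₂ b₂ = 0 ∨ L a₃ b₃ = 0) ∧
        (L a₁ b₁ = 1 ∨ L a₂ b₂ = 1 ∨ L a₃ b₃ = 1) ∧
        (L a₁ b₁ = 2 ∨ L a₂ b₂ = 2 ∨ L a₃ b₃ = 2)) := by
    intro i j hi hj a₁ b₁ a₂ b₂ a₃ b₃ ha₁ hb₁ ha₂ hb₂ ha₃ hb₃ ⟨h0, h1, h2⟩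
    apply Hc
    refine ⟨i, j, hi, hj, ?_, ?_, ?_⟩
    · rcases h0 with h | h | h
      exacts [⟨a₁, b₁, ha₁, hb₁, h⟩, ⟨a₂, b₂, ha₂, hb₂, h⟩, ⟨a₃, b₃, ha₃, hb₃, h⟩]
    · rcases h1 with h | h | h
      exacts [⟨a₁, b₁, ha₁, hb₁, h⟩, ⟨a₂, b₂, ha₂, hb₂, h⟩, ⟨a₃, b₃, ha₃, hb₃, h⟩]
    · rcases h2 with h | h | h
      exacts [⟨a₁, b₁, ha₁, hb₁, h⟩, ⟨a₂, b₂, ha₂, hb₂, h⟩, ⟨a₃, b₃, ha₃, hb₃, h⟩]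
  have cell : ∀ i j, i < n → j < n →
      (eZ (L i j) (L (i + 1) j) + eZ (L i (j + 1)) (L (i + 1) (j + 1)))
      + (eZ (L i j) (L i (j + 1)) + eZ (L (i + 1) j) (L (i + 1) (j + 1))) = 0 := by
    intro i j hi hj
    have h1 : eZ (L i j) (L (i + 1) j) + eZ (L i j) (L i (j + 1)) +
        eZ (L (i + 1) j) (L i (j + 1)) = 0 := by
      apply e_not_full
      exact notfull i j hi hj i j (i+1) j i (j+1) (Or.inl rfl) (Or.inl rfl)
        (Or.inr rfl) (Or.inl rfl) (Or.inl rfl) (Or.inr rfl)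
    have h2 : eZ (L (i + 1) j) (L i (j + 1)) + eZ (L (i + 1) j) (L (i + 1) (j + 1)) +
        eZ (L i (j + 1)) (L (i + 1) (j + 1)) = 0 := by
      apply e_not_full
      exact notfull i j hi hj (i+1) j i (j+1) (i+1) (j+1) (Or.inr rfl) (Or.inl rfl)
        (Or.inl rfl) (Or.inr rfl) (Or.inr rfl) (Or.inr rfl)
    linear_combination h1 + h2 - zmod2_add_self (eZ (L (i + 1) j) (L i (j + 1)))
  have total : (0 : ZMod 2) =
      ∑ j ∈ Finset.range n, ∑ i ∈ Finset.range n,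
        ((eZ (L i j) (L (i + 1) j) + eZ (L i (j + 1)) (L (i + 1) (j + 1)))
          + (eZ (L i j) (L i (j + 1)) + eZ (L (i + 1) j) (L (i + 1) (j + 1)))) := by
    rw [Finset.sum_congr rfl fun j hj => Finset.sum_congr rfl fun i hi =>
      cell i j (Finset.mem_range.mp hi) (Finset.mem_range.mp hj)]
    simp
  have inner : ∀ j,
      (∑ i ∈ Finset.range n,
        ((eZ (L i j) (L (i + 1) j) + eZ (L i (j + 1)) (L (i + 1) (j + 1)))
          + (eZ (L i j) (L i (j + 1)) + eZ (L (i + 1) j) (L (i + 1) (j + 1))))) =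
      ((∑ i ∈ Finset.range n, eZ (L i j) (L (i + 1) j))
        + (∑ i ∈ Finset.range n, eZ (L i (j + 1)) (L (i + 1) (j + 1))))
      + (eZ (L 0 j) (L 0 (j + 1)) + eZ (L n j) (L n (j + 1))) := by
    intro j
    have t1 : (∑ i ∈ Finset.range n,
        (eZ (L i j) (L i (j + 1)) + eZ (L (i + 1) j) (L (i + 1) (j + 1)))) =
        eZ (L 0 j) (L 0 (j + 1)) + eZ (L n j) (L n (j + 1)) :=
      tele n (fun i => eZ (L i j) (L i (j + 1)))
    rw [Finset.sum_add_distrib, Finset.sum_add_distrib, t1]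
  rw [Finset.sum_congr rfl fun j _ => inner j] at total
  have t2 : (∑ j ∈ Finset.range n,
      ((∑ i ∈ Finset.range n, eZ (L i j) (L (i + 1) j))
        + (∑ i ∈ Finset.range n, eZ (L i (j + 1)) (L (i + 1) (j + 1))))) =
      (∑ i ∈ Finset.range n, eZ (L i 0) (L (i + 1) 0))
        + (∑ i ∈ Finset.range n, eZ (L i n) (L (i + 1) n)) :=
    tele n (fun j => ∑ i ∈ Finset.range n, eZ (L i j) (L (i + 1) j))
  rw [Finset.sum_add_distrib, t2, Finset.sum_add_distrib] at total
  have hc0 : (∑ i ∈ Finset.range n, eZ (L i 0) (L (i + 1) 0)) = 0 := by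
    apply Finset.sum_eq_zero
    intro i hi
    have hi' := Finset.mem_range.mp hi
    rw [hbot i (le_of_lt hi'), hbot (i+1) hi']
    decide
  have hcn : (∑ i ∈ Finset.range n, eZ (L i n) (L (i + 1) n)) = 0 := by
    apply Finset.sum_eq_zero
    intro i hi
    have hi' := Finset.mem_range.mp hi
    exact e_no1 _ _ (htop i (le_of_lt hi')) (htop (i+1) hi')
  have hR : (∑ j ∈ Finset.range n, eZ (L n j) (L n (j + 1))) = 0 := by
    apply Finset.sum_eq_zero
    intro j hj
    have hj' := Finset.mem_range.mp hj
    exact e_no0 _ _ (hright j (le_of_lt hj')) (hright (j+1) hj')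
  have hL : (∑ j ∈ Finset.range n, eZ (L 0 j) (L 0 (j + 1))) = 1 := by
    have hm : ∀ j ∈ Finset.range n,
        eZ (L 0 j) (L 0 (j + 1)) = mZ (L 0 j) + mZ (L 0 (j + 1)) := by
      intro j hj
      have hj' := Finset.mem_range.mp hj
      exact e_eq_m _ _ (hleft j (le_of_lt hj')) (hleft (j+1) hj')
    have t3 : (∑ j ∈ Finset.range n, (mZ (L 0 j) + mZ (L 0 (j + 1)))) =
        mZ (L 0 0) + mZ (L 0 n) := tele n (fun j => mZ (L 0 j))
    rw [Finset.sum_congr rfl hm, t3, hbot 0 (Nat.zero_le n)]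
    have h1 : mZ (L 0 n) = 0 := by
      have ht := htop 0 (Nat.zero_le n)
      have hl := hleft n le_rfl
      revert ht hl
      generalize L 0 n = x
      revert x
      decide
    rw [h1]
    decide
  rw [hc0, hcn, hR, hL] at total
  simp at total

private lemma periodic_II {f : ℝ → ℝ} (hfp : Function.Periodic f 1)
    (hf : IntervalIntegrable f MeasureTheory.volume 0 1) :
    ∀ a b : ℝ, IntervalIntegrable f MeasureTheory.volume a b := by
  have hunit : ∀ m : ℤ, IntervalIntegrable f MeasureTheory.volume (m : ℝ) ((m : ℝ) + 1) := by
    intro m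
    have hper : Function.Periodic f (-(m : ℝ)) := by
      simpa using hfp.int_mul (-m)
    have h2 := hf.comp_add_right (-(m : ℝ))
    rw [hper.funext] at h2
    have e1 : (0 : ℝ) - -(m : ℝ) = m := by ring
    have e2 : (1 : ℝ) - -(m : ℝ) = (m : ℝ) + 1 := by ring
    rwa [e1, e2] at h2
  have hpos : ∀ N : ℕ, IntervalIntegrable f MeasureTheory.volume 0 (N : ℝ) := by
    intro N
    induction N with
    | zero => simpa using IntervalIntegrable.refl
    | succ N ih =>
        have h := hunit (N : ℤ)
        push_cast at h
        have : ((N : ℝ) + 1) = ((N + 1 : ℕ) : ℝ) := by push_cast; ring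
        rw [this] at h
        exact ih.trans h
  have hneg : ∀ N : ℕ, IntervalIntegrable f MeasureTheory.volume (-(N : ℝ)) 0 := by
    intro N
    induction N with
    | zero => simpa using IntervalIntegrable.refl
    | succ N ih =>
        have h := hunit (-(N : ℤ) - 1)
        push_cast at h
        rw [show (-(N : ℝ) - 1 + 1) = -(N : ℝ) by ring,
          show (-(N : ℝ) - 1) = -((N + 1 : ℕ) : ℝ) by push_cast; ring] at h
        exact h.trans ih
  intro a b
  obtain ⟨N, hN⟩ := exists_nat_ge (max |a| |b|)
  have hNa : |a| ≤ (N : ℝ) := le_trans (le_max_left _ _) hN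
  have hNb : |b| ≤ (N : ℝ) := le_trans (le_max_right _ _) hN
  have hIN : IntervalIntegrable f MeasureTheory.volume (-(N : ℝ)) (N : ℝ) :=
    (hneg N).trans (hpos N)
  apply hIN.mono_set
  apply Set.uIcc_subset_uIcc
  · rw [Set.mem_uIcc]
    left
    constructor
    · linarith [abs_le.mp hNa |>.1]
    · linarith [abs_le.mp hNa |>.2]
  · rw [Set.mem_uIcc]
    left
    constructor
    · linarith [abs_le.mp hNb |>.1]
    · linarith [abs_le.mp hNb |>.2]
set_option maxHeartbeats 1000000 in
private theorem key (F G : ℝ → ℝ) (hFc : Continuous F) (hGc : Continuous G)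
    (hFadd : ∀ x, F (x + 1) = F x + 1) (hGadd : ∀ x, G (x + 1) = G x + 1)
    (r : ℝ) (hr0 : 0 < r) (hr1 : r < 1) :
    ∃ x t : ℝ, t ∈ Set.Icc (0 : ℝ) 1 ∧ F (x + t) - F x = r ∧ G (x + t) - G x = r := by
  classical
  set W : ℝ → ℝ := fun x => F x - G x with hWdef
  have hWc : Continuous W := by rw [hWdef]; exact hFc.sub hGc
  have hWp : Function.Periodic W 1 := by
    intro x; simp only [hWdef]; rw [hFadd, hGadd]; ring
  clear_value W
  obtain ⟨p, hpI, hpmax⟩ := isCompact_Icc.exists_isMaxOn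
    (Set.nonempty_Icc.mpr zero_le_one) hWc.continuousOn
  obtain ⟨q, hqI, hqmin⟩ := isCompact_Icc.exists_isMinOn
    (Set.nonempty_Icc.mpr zero_le_one) hWc.continuousOn
  have hpglob : ∀ y, W y ≤ W p := by
    intro y
    obtain ⟨z, hz, hzy⟩ := hWp.exists_mem_Ico₀ one_pos y
    rw [hzy]; exact hpmax ⟨hz.1, hz.2.le⟩
  have hqglob : ∀ y, W q ≤ W y := by
    intro y
    obtain ⟨z, hz, hzy⟩ := hWp.exists_mem_Ico₀ one_pos y
    rw [hzy]; exact hqmin ⟨hz.1, hz.2.le⟩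
  set P : ℝ × ℝ → ℝ := fun z => W (z.1 + z.2) - W z.1 with hPdef
  set Q : ℝ × ℝ → ℝ := fun z =>
    (F (z.1 + z.2) + G (z.1 + z.2)) - (F z.1 + G z.1) - 2 * r with hQdef
  have hPc : Continuous P := by
    rw [hPdef]
    exact (hWc.comp (continuous_fst.add continuous_snd)).sub (hWc.comp continuous_fst)
  have hQc : Continuous Q := by
    rw [hQdef]
    exact (((hFc.comp (continuous_fst.add continuous_snd)).add
      (hGc.comp (continuous_fst.add continuous_snd))).sub
      ((hFc.comp continuous_fst).add (hGc.comp continuous_fst))).sub continuous_const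
  clear_value P Q
  have hQbot : ∀ x : ℝ, Q (x, 0) < 0 := by
    intro x; simp only [hQdef]; norm_num; linarith
  have hQtop : ∀ x : ℝ, 0 < Q (x, 1) := by
    intro x; simp only [hQdef]; rw [hFadd, hGadd]; linarith
  have hPleft : ∀ t : ℝ, P (p, t) ≤ 0 := by
    intro t; simp only [hPdef]; have := hpglob (p + t); linarith
  have hPright : ∀ t : ℝ, 0 ≤ P (q, t) := by
    intro t; simp only [hPdef]; have := hqglob (q + t); linarith
  set K : Set (ℝ × ℝ) := Set.uIcc p q ×ˢ Set.Icc (0 : ℝ) 1 with hKdef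
  have hKc : IsCompact K := isCompact_uIcc.prod isCompact_Icc
  have hKne : K.Nonempty :=
    ⟨(p, 0), Set.mem_prod.mpr ⟨Set.left_mem_uIcc, Set.mem_Icc.mpr ⟨le_rfl, zero_le_one⟩⟩⟩
  obtain ⟨zs, hzsK, hzsmin⟩ := hKc.exists_isMinOn hKne ((hPc.abs.add hQc.abs).continuousOn)
  have main : ∀ ε : ℝ, 0 < ε → |P zs| + |Q zs| < ε := by
    intro ε hε
    obtain ⟨δP, hδP, hPu⟩ := Metric.uniformContinuousOn_iff.mp
      (hKc.uniformContinuousOn_of_continuous hPc.continuousOn) (ε / 4) (by linarith)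
    obtain ⟨δQ, hδQ, hQu⟩ := Metric.uniformContinuousOn_iff.mp
      (hKc.uniformContinuousOn_of_continuous hQc.continuousOn) (ε / 4) (by linarith)
    have hδ : 0 < min δP δQ := lt_min hδP hδQ
    obtain ⟨n, hn⟩ := exists_nat_gt ((|q - p| + 1) / min δP δQ)
    have hnpos : (0 : ℝ) < n := lt_trans (div_pos (by positivity) hδ) hn
    have hn0 : 0 < n := by exact_mod_cast hnpos
    have hne : (n : ℝ) ≠ 0 := ne_of_gt hnpos
    set vx : ℕ → ℝ := fun i => p + (q - p) * i / n with hvxdef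
    set vt : ℕ → ℝ := fun j => (j : ℝ) / n with hvtdef
    clear_value vx vt
    have hvx0 : vx 0 = p := by simp [hvxdef]
    have hvxn : vx n = q := by
      simp only [hvxdef]; rw [mul_div_assoc, div_self hne, mul_one]; ring
    have hvt0 : vt 0 = 0 := by simp [hvtdef]
    have hvtn : vt n = 1 := by simp only [hvtdef]; rw [div_self hne]
    have hmemK : ∀ i j : ℕ, i ≤ n → j ≤ n → ((vx i, vt j) : ℝ × ℝ) ∈ K := by
      intro i j hi hj
      apply Set.mem_prod.mpr
      have h1 : 0 ≤ (i : ℝ) / n := by positivity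
      have h2 : (i : ℝ) / n ≤ 1 := by
        rw [div_le_one hnpos]; exact_mod_cast hi
      constructor
      · rw [Set.mem_uIcc]
        have hform : vx i = p + (q - p) * ((i : ℝ) / n) := by
          simp only [hvxdef]; ring
        rcases le_total p q with hpq | hpq
        · left; rw [hform]; constructor
          · nlinarith
          · nlinarith
        · right; rw [hform]; constructor
          · nlinarith
          · nlinarith
      · refine Set.mem_Icc.mpr ⟨?_, ?_⟩
        · simp only [hvtdef]; positivity
        · simp only [hvtdef]
          rw [div_le_one hnpos]; exact_mod_cast hj
    set L : ℕ → ℕ → Fin 3 := fun i j =>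
      if Q (vx i, vt j) < 0 then 1
      else if i = n then 2
      else if P (vx i, vt j) ≤ 0 then 0 else 2 with hLdef
    clear_value L
    have hbot : ∀ i, i ≤ n → L i 0 = 1 := by
      intro i _
      simp only [hLdef, hvt0]
      rw [if_pos (hQbot (vx i))]
    have htop : ∀ i, i ≤ n → L i n ≠ 1 := by
      intro i _
      simp only [hLdef, hvtn]
      rw [if_neg (not_lt.mpr (le_of_lt (hQtop (vx i))))]
      split_ifs <;> decide
    have hleft : ∀ j, j ≤ n → L 0 j ≠ 2 := by
      intro j _
      simp only [hLdef, hvx0]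
      split_ifs with h1 h2 h3
      · decide
      · exact absurd h2 (by omega)
      · decide
      · exact absurd (hPleft (vt j)) h3
    have hright : ∀ j, j ≤ n → L n j ≠ 0 := by
      intro j _
      simp only [hLdef]
      split_ifs with h1
      · decide
      · decide
    obtain ⟨i, j, hi, hj, ⟨a0, b0, ha0, hb0, hL0⟩, ⟨a1, b1, ha1, hb1, hL1⟩,
      ⟨a2, b2, ha2, hb2, hL2⟩⟩ := sperner n hn0 L hbot htop hleft hright
    have ha0n : a0 ≤ n := by rcases ha0 with rfl | rfl <;> omega
    have hb0n : b0 ≤ n := by rcases hb0 with rfl | rfl <;> omega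
    have ha1n : a1 ≤ n := by rcases ha1 with rfl | rfl <;> omega
    have hb1n : b1 ≤ n := by rcases hb1 with rfl | rfl <;> omega
    have ha2n : a2 ≤ n := by rcases ha2 with rfl | rfl <;> omega
    have hb2n : b2 ≤ n := by rcases hb2 with rfl | rfl <;> omega
    have hm0 := hmemK a0 b0 ha0n hb0n
    have hm1 := hmemK a1 b1 ha1n hb1n
    have hm2 := hmemK a2 b2 ha2n hb2n
    -- decode labels
    have hz0 : P (vx a0, vt b0) ≤ 0 ∧ 0 ≤ Q (vx a0, vt b0) := by
      simp only [hLdef] at hL0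
      split_ifs at hL0 with h1 h2 h3
      · exact absurd hL0 (by decide)
      · exact absurd hL0 (by decide)
      · exact ⟨h3, not_lt.mp h1⟩
      · exact absurd hL0 (by decide)
    have hz1 : Q (vx a1, vt b1) < 0 := by
      simp only [hLdef] at hL1
      split_ifs at hL1 with h1 h2 h3
      · exact h1
      · exact absurd hL1 (by decide)
      · exact absurd hL1 (by decide)
      · exact absurd hL1 (by decide)
    have hz2 : 0 ≤ P (vx a2, vt b2) ∧ 0 ≤ Q (vx a2, vt b2) := by
      simp only [hLdef] at hL2
      split_ifs at hL2 with h1 h2 h3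
      · exact absurd hL2 (by decide)
      · subst h2
        rw [hvxn] at h1 ⊢
        exact ⟨hPright (vt b2), not_lt.mp h1⟩
      · exact absurd hL2 (by decide)
      · exact ⟨le_of_lt (not_le.mp h3), not_lt.mp h1⟩
    -- distance bound
    have hdist : ∀ a b a' b' : ℕ, (a = i ∨ a = i + 1) → (b = j ∨ b = j + 1) →
        (a' = i ∨ a' = i + 1) → (b' = j ∨ b' = j + 1) →
        dist ((vx a, vt b) : ℝ × ℝ) ((vx a', vt b') : ℝ × ℝ) < min δP δQ := by
      intro a b a' b' ha hb ha' hb'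
      have hcast : |(a : ℝ) - (a' : ℝ)| ≤ 1 := by
        rw [abs_le]
        rcases ha with rfl | rfl <;> rcases ha' with rfl | rfl <;>
          constructor <;> push_cast <;> linarith
      have hcast' : |(b : ℝ) - (b' : ℝ)| ≤ 1 := by
        rw [abs_le]
        rcases hb with rfl | rfl <;> rcases hb' with rfl | rfl <;>
          constructor <;> push_cast <;> linarith
      have hxx : dist (vx a) (vx a') ≤ |q - p| / n := by
        rw [Real.dist_eq]
        have hform : vx a - vx a' = (q - p) * ((a : ℝ) - (a' : ℝ)) / n := by
          simp only [hvxdef]; ring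
        rw [hform, abs_div, abs_mul, Nat.abs_cast]
        calc |q - p| * |(a : ℝ) - (a' : ℝ)| / n ≤ |q - p| * 1 / n := by gcongr
          _ = |q - p| / n := by ring
      have htt : dist (vt b) (vt b') ≤ 1 / n := by
        rw [Real.dist_eq]
        have hform : vt b - vt b' = ((b : ℝ) - (b' : ℝ)) / n := by
          simp only [hvtdef]; ring
        rw [hform, abs_div, Nat.abs_cast]
        gcongr
      have hmesh : (|q - p| + 1) / n < min δP δQ := by
        rw [div_lt_iff₀ hnpos, mul_comm]
        exact (div_lt_iff₀ hδ).mp hn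
      rw [Prod.dist_eq]
      have h1 : |q - p| / n ≤ (|q - p| + 1) / n :=
        (div_le_div_iff_of_pos_right hnpos).mpr (by linarith)
      have h2 : (1 : ℝ) / n ≤ (|q - p| + 1) / n :=
        (div_le_div_iff_of_pos_right hnpos).mpr (by linarith [abs_nonneg (q - p)])
      apply lt_of_le_of_lt (max_le (le_trans hxx h1) (le_trans htt h2)) hmesh
    -- estimates
    have eP : |P (vx a0, vt b0)| < ε / 4 := by
      have hd := hPu _ hm2 _ hm0
        (lt_of_lt_of_le (hdist a2 b2 a0 b0 ha2 hb2 ha0 hb0) (min_le_left _ _))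
      rw [Real.dist_eq] at hd
      have habs := abs_lt.mp hd
      rw [abs_of_nonpos hz0.1]
      have := hz2.1
      linarith [habs.1, habs.2]
    have eQ : |Q (vx a0, vt b0)| < ε / 4 := by
      have hd := hQu _ hm0 _ hm1
        (lt_of_lt_of_le (hdist a0 b0 a1 b1 ha0 hb0 ha1 hb1) (min_le_right _ _))
      rw [Real.dist_eq] at hd
      have habs := abs_lt.mp hd
      rw [abs_of_nonneg hz0.2]
      linarith [habs.1, habs.2]
    have hminle : |P zs| + |Q zs| ≤ |P (vx a0, vt b0)| + |Q (vx a0, vt b0)| :=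
      hzsmin hm0
    linarith
  have hnn : 0 ≤ |P zs| + |Q zs| := by positivity
  have h0 : |P zs| + |Q zs| = 0 := by
    rcases eq_or_lt_of_le hnn with h | h
    · exact h.symm
    · exact absurd (main _ h) (lt_irrefl _)
  have hP0 : P zs = 0 := by
    have h1 := abs_nonneg (P zs)
    have h2 := abs_nonneg (Q zs)
    have : |P zs| = 0 := by linarith
    exact abs_eq_zero.mp this
  have hQ0 : Q zs = 0 := by
    have h1 := abs_nonneg (P zs)
    have h2 := abs_nonneg (Q zs)
    have : |Q zs| = 0 := by linarith
    exact abs_eq_zero.mp this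
  refine ⟨zs.1, zs.2, (Set.mem_prod.mp hzsK).2, ?_, ?_⟩
  · simp only [hPdef, hWdef] at hP0
    simp only [hQdef] at hQ0
    linarith
  · simp only [hPdef, hWdef] at hP0
    simp only [hQdef] at hQ0
    linarith

/-- Corollary 2 (circle version): if `f, g` are `1`-periodic, integrable on `[0,1]`,
with `∫₀¹ f = ∫₀¹ g = 1`, then for every `r ∈ [0,1]` there is an arc `[x, x+t]`
(`0 ≤ t ≤ 1`) on which both integrals equal `r`. -/
theorem totik_circle
    (f g : ℝ → ℝ)
    (hfp : Function.Periodic f 1) (hgp : Function.Periodic g 1)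
    (hf : IntervalIntegrable f MeasureTheory.volume 0 1)
    (hg : IntervalIntegrable g MeasureTheory.volume 0 1)
    (hf1 : (∫ t in (0:ℝ)..1, f t) = 1)
    (hg1 : (∫ t in (0:ℝ)..1, g t) = 1)
    (r : ℝ) (hr : r ∈ Set.Icc (0:ℝ) 1) :
    ∃ x t : ℝ, t ∈ Set.Icc (0:ℝ) 1 ∧
      (∫ s in x..(x + t), f s) = r ∧ (∫ s in x..(x + t), g s) = r := by
  obtain ⟨hr0, hr1⟩ := hr
  rcases eq_or_lt_of_le hr0 with hr0' | hr0'
  · refine ⟨0, 0, Set.mem_Icc.mpr ⟨le_rfl, zero_le_one⟩, ?_, ?_⟩ <;>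
      simp [intervalIntegral.integral_same, ← hr0']
  rcases eq_or_lt_of_le hr1 with hr1' | hr1'
  · refine ⟨0, 1, Set.mem_Icc.mpr ⟨zero_le_one, le_rfl⟩, ?_, ?_⟩
    · rw [zero_add, hf1, hr1']
    · rw [zero_add, hg1, hr1']
  have hfI := periodic_II hfp hf
  have hgI := periodic_II hgp hg
  have hFc : Continuous (fun x => ∫ s in (0:ℝ)..x, f s) :=
    intervalIntegral.continuous_primitive hfI 0
  have hGc : Continuous (fun x => ∫ s in (0:ℝ)..x, g s) :=
    intervalIntegral.continuous_primitive hgI 0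
  have hFd : ∀ x y : ℝ,
      (∫ s in x..y, f s) = (∫ s in (0:ℝ)..y, f s) - ∫ s in (0:ℝ)..x, f s := by
    intro x y
    have h := intervalIntegral.integral_add_adjacent_intervals (hfI 0 x) (hfI x y)
    linarith
  have hGd : ∀ x y : ℝ,
      (∫ s in x..y, g s) = (∫ s in (0:ℝ)..y, g s) - ∫ s in (0:ℝ)..x, g s := by
    intro x y
    have h := intervalIntegral.integral_add_adjacent_intervals (hgI 0 x) (hgI x y)
    linarith
  have hFadd : ∀ x : ℝ,
      (∫ s in (0:ℝ)..(x + 1), f s) = (∫ s in (0:ℝ)..x, f s) + 1 := by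
    intro x
    have h2 : (∫ s in x..(x + 1), f s) = ∫ s in (0:ℝ)..(0 + 1), f s :=
      hfp.intervalIntegral_add_eq x 0
    rw [zero_add, hf1] at h2
    have h3 := hFd x (x + 1)
    linarith
  have hGadd : ∀ x : ℝ,
      (∫ s in (0:ℝ)..(x + 1), g s) = (∫ s in (0:ℝ)..x, g s) + 1 := by
    intro x
    have h2 : (∫ s in x..(x + 1), g s) = ∫ s in (0:ℝ)..(0 + 1), g s :=
      hgp.intervalIntegral_add_eq x 0
    rw [zero_add, hg1] at h2
    have h3 := hGd x (x + 1)
    linarith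
  obtain ⟨x, t, ht, hFr, hGr⟩ := key (fun x => ∫ s in (0:ℝ)..x, f s)
    (fun x => ∫ s in (0:ℝ)..x, g s) hFc hGc hFadd hGadd r hr0' hr1'
  have hFr' : (∫ s in (0:ℝ)..(x + t), f s) - (∫ s in (0:ℝ)..x, f s) = r := hFr
  have hGr' : (∫ s in (0:ℝ)..(x + t), g s) - (∫ s in (0:ℝ)..x, g s) = r := hGr
  refine ⟨x, t, ht, ?_, ?_⟩
  · rw [hFd x (x + t)]; linarith
  · rw [hGd x (x + t)]; linarith
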